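/- Let M solve the Dyson equation -M⁻¹ = [[iη, ζ], [conj(ζ), iη]] + S[M] with positive definite imaginary part, for η > 0 and ζ ∈ ℂ. Then the operator norm of M satisfies ‖M‖ ≤ min(1, 1/η), and in particular ‖M‖ ≤ 2/(1+η). -/

import Mathlib

open Matrix
open scoped Matrix.Norms.L2Operator ComplexOrder

/-- The self-energy operator of the elliptic ensemble. -/
noncomputable def selfEnergy (ρ : ℝ) (A : Matrix (Fin 2) (Fin 2) ℂ) : Matrix (Fin 2) (Fin 2) ℂ :=
  !![A 1 1, (ρ : ℂ) * A 1 0; (ρ : ℂ) * A 0 1, A 0 0]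

theorem stmt1 (ρ η : ℝ) (hρ₁ : -1 < ρ) (hρ₂ : ρ < 1) (hη : 0 < η) (ζ : ℂ)
    (M : Matrix (Fin 2) (Fin 2) ℂ) (v : ℝ) (b : ℂ) (hv : 0 < v)
    (hform : M = !![Complex.I * v, (starRingEnd ℂ) b; b, Complex.I * v])
    (hunit : IsUnit M.det)
    (hIm : ((2 * Complex.I)⁻¹ • (M - Mᴴ)).PosDef)
    (hdyson : -M⁻¹ = !![Complex.I * η, ζ; (starRingEnd ℂ) ζ, Complex.I * η] + selfEnergy ρ M) :
    ‖M‖ ≤ min 1 (1 / η) ∧ ‖M‖ ≤ 2 / (1 + η) := by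
  set s : ℝ := v ^ 2 + Complex.normSq b with hs_def
  have hs_pos : 0 < s := by
    have := Complex.normSq_nonneg b
    nlinarith
  have hsC : ((s : ℂ)) ≠ 0 := by exact_mod_cast hs_pos.ne'
  have hb : (starRingEnd ℂ) b * b = (b.re : ℂ) ^ 2 + (b.im : ℂ) ^ 2 := by
    rw [mul_comm, Complex.mul_conj]
    push_cast [Complex.normSq_apply]
    ring
  -- explicit inverse
  have hMinv : M⁻¹ = (-(s : ℂ))⁻¹ • !![Complex.I * v, -((starRingEnd ℂ) b); -b, Complex.I * v] := by
    apply Matrix.inv_eq_right_inv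
    rw [hform, Matrix.mul_smul, Matrix.mul_fin_two]
    have hd : ((v : ℂ)) ^ 2 + (b.re : ℂ) ^ 2 + (b.im : ℂ) ^ 2 ≠ 0 := by
      have h : (0:ℝ) < v ^ 2 + b.re ^ 2 + b.im ^ 2 := by nlinarith [Complex.normSq_nonneg b]
      intro hc
      have : ((v ^ 2 + b.re ^ 2 + b.im ^ 2 : ℝ) : ℂ) = 0 := by push_cast; linear_combination hc
      exact h.ne' (by exact_mod_cast this)
    have hinvD : ((-(v:ℂ)^2 + (-(b.im:ℂ)^2 - (b.re:ℂ)^2))) * ((-(v:ℂ)^2 + (-(b.im:ℂ)^2 - (b.re:ℂ)^2)))⁻¹ = 1 := by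
      apply mul_inv_cancel₀
      intro hc
      have h : (0:ℝ) < v ^ 2 + b.re ^ 2 + b.im ^ 2 := by nlinarith [Complex.normSq_nonneg b]
      have : ((v ^ 2 + b.re ^ 2 + b.im ^ 2 : ℝ) : ℂ) = 0 := by push_cast; linear_combination -hc
      exact h.ne' (by exact_mod_cast this)
    ext i j
    fin_cases i <;> fin_cases j <;>
      · simp [Matrix.one_apply, smul_eq_mul]
        try push_cast [hs_def, Complex.normSq_apply]
        try field_simp
        first
        | ring1
        | exact Or.inr (by ring)
        | linear_combination ((v:ℂ)^2 * ((-(v:ℂ)^2 + (-(b.im:ℂ)^2 - (b.re:ℂ)^2))⁻¹)) * Complex.I_sq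
            - ((-(v:ℂ)^2 + (-(b.im:ℂ)^2 - (b.re:ℂ)^2))⁻¹) * hb + hinvD
        | (rw [show (-(v:ℂ)^2 - (b.re:ℂ)^2 - (b.im:ℂ)^2) = -((v:ℂ)^2 + (b.re:ℂ)^2 + (b.im:ℂ)^2) by ring,
            inv_neg]; ring)
        | (rw [neg_div', div_eq_one_iff_eq (by rw [← add_assoc]; exact hd)]
           linear_combination hb - ((v:ℂ)^2) * Complex.I_sq)
  -- entry (0,0) of the Dyson equation
  have h00 := congrFun (congrFun hdyson 0) 0
  rw [hMinv] at h00
  simp [selfEnergy, hform, smul_eq_mul] at h00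
  have hinv : (-(s:ℂ)) * (-(s:ℂ))⁻¹ = 1 := mul_inv_cancel₀ (neg_ne_zero.mpr hsC)
  have hkeyC : Complex.I * (v:ℂ) = Complex.I * (((η:ℂ) + v) * s) := by
    linear_combination ((s:ℂ)) * h00 - (Complex.I * (v:ℂ)) * hinv
  have hkey : v = (η + v) * s := by
    have h := mul_left_cancel₀ Complex.I_ne_zero hkeyC
    exact_mod_cast h
  -- norm computation
  have hMhM : Mᴴ * M = ((s : ℂ)) • (1 : Matrix (Fin 2) (Fin 2) ℂ) := by
    rw [hform]
    ext i j
    fin_cases i <;> fin_cases j <;>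
      · simp [Matrix.mul_apply, Fin.sum_univ_two, Matrix.one_apply, Matrix.conjTranspose_apply,
          smul_eq_mul]
        try push_cast [hs_def, Complex.normSq_apply]
        first
        | ring1
        | linear_combination hb - ((v:ℂ)^2) * Complex.I_sq
  have hnorm : ‖M‖ * ‖M‖ = s := by
    rw [← CStarRing.norm_star_mul_self, Matrix.star_eq_conjTranspose, hMhM, norm_smul, norm_one,
      mul_one, Complex.norm_real, Real.norm_of_nonneg hs_pos.le]
  have hMn : 0 ≤ ‖M‖ := norm_nonneg M
  have hv2 : v ^ 2 ≤ s := by nlinarith [Complex.normSq_nonneg b]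
  have hvM : v ≤ ‖M‖ := by nlinarith
  have hMpos : 0 < ‖M‖ := lt_of_lt_of_le hv hvM
  have hs1 : s < 1 := by nlinarith
  have h1 : ‖M‖ ≤ 1 := by nlinarith
  have h2 : ‖M‖ ≤ 1 / η := by
    rw [le_div_iff₀ hη]
    nlinarith [mul_pos hη hMpos]
  refine ⟨le_min h1 h2, ?_⟩
  rcases le_total η 1 with h | h
  · calc ‖M‖ ≤ 1 := h1
      _ ≤ 2 / (1 + η) := by rw [le_div_iff₀ (by linarith : (0:ℝ) < 1 + η)]; linarith
  · calc ‖M‖ ≤ 1 / η := h2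
      _ ≤ 2 / (1 + η) := by
        rw [div_le_div_iff₀ hη (by linarith)]; linarith
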